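/- For all real numbers α and β, the characteristic polynomial of the 4×4 matrix α·A(0) + β·B, where A(0) has rows (0,1,0,0), (0,0,0,0), (0,0,0,1), (0,0,0,0) and B has rows (0,0,1,0), (0,0,0,1), (−1,0,0,0), (0,−1,0,0), equals (X² + β²)²; in particular no linear combination of A(0) and B has four distinct eigenvalues, so the equilibrium (0,0,0,0,0) is a degenerate equilibrium of the reduced Maxwell–Bloch system. -/

import Mathlib

open Matrix Polynomial

/-- Every linear combination `α·A(0) + β·B` of the linearizations at the origin has
characteristic polynomial `(X² + β²)²`; in particular no such combination has four distinct
eigenvalues, so the equilibrium `(0,0,0,0,0)` is degenerate. -/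
theorem origin_degenerate (α β : ℝ) :
    ((α • (!![0, 1, 0, 0;
              0, 0, 0, 0;
              0, 0, 0, 1;
              0, 0, 0, 0] : Matrix (Fin 4) (Fin 4) ℝ) +
       β • (!![0, 0, 1, 0;
               0, 0, 0, 1;
               -1, 0, 0, 0;
               0, -1, 0, 0] : Matrix (Fin 4) (Fin 4) ℝ)).charpoly =
      (X ^ 2 + C (β ^ 2)) ^ 2) ∧
    ¬∃ w1 w2 w3 w4 : ℂ,
      (w1 ≠ w2 ∧ w1 ≠ w3 ∧ w1 ≠ w4 ∧ w2 ≠ w3 ∧ w2 ≠ w4 ∧ w3 ≠ w4) ∧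
      (((X ^ 2 + C ((β : ℂ) ^ 2)) ^ 2).IsRoot w1 ∧
       ((X ^ 2 + C ((β : ℂ) ^ 2)) ^ 2).IsRoot w2 ∧
       ((X ^ 2 + C ((β : ℂ) ^ 2)) ^ 2).IsRoot w3 ∧
       ((X ^ 2 + C ((β : ℂ) ^ 2)) ^ 2).IsRoot w4) := by
  constructor
  · rw [Matrix.charpoly]
    simp [Matrix.charmatrix, Matrix.det_succ_row_zero, Fin.sum_univ_succ,
      Matrix.smul_apply, Matrix.submatrix, Fin.succAbove, Matrix.diagonal_apply]
    ring
  · rintro ⟨w1, w2, w3, w4, ⟨h12, h13, _, h23, _, _⟩, r1, r2, r3, _⟩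
    have sq : ∀ w : ℂ, ((X ^ 2 + C ((β : ℂ) ^ 2)) ^ 2).IsRoot w → w ^ 2 = -(β : ℂ) ^ 2 := by
      intro w hw
      have := hw
      simp [Polynomial.IsRoot, eval_pow, eval_add, eval_C] at this
      linear_combination this
    have e1 := sq w1 r1
    have e2 := sq w2 r2
    have e3 := sq w3 r3
    have h2 : w2 = -w1 := by
      have : (w2 - w1) * (w2 + w1) = 0 := by linear_combination e2 - e1
      rcases mul_eq_zero.mp this with h | h
      · exact absurd (sub_eq_zero.mp h) h12.symm
      · linear_combination h
    have h3 : w3 = w1 ∨ w3 = -w1 := by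
      have : (w3 - w1) * (w3 + w1) = 0 := by linear_combination e3 - e1
      rcases mul_eq_zero.mp this with h | h
      · exact Or.inl (by linear_combination h)
      · exact Or.inr (by linear_combination h)
    rcases h3 with h | h
    · exact h13 h.symm
    · exact h23 (by rw [h2, h])
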